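/- Let a < b, M : [a,b] → ℝ continuous, u : [a,b] → ℝ continuous. Then ∫ₐᵇ (∫ₐ^s (s-η)·u(η) dη) · M(s) · (∫ₐ^s (s-ζ)·u(ζ) dζ) ds = ∫ₐᵇ ∫ₐᵇ u(s) · K(s,θ) · u(θ) dθ ds, where K(s,θ) = I(s-θ)·∫_s^b (η-s)(η-θ)·M(η) dη + I(θ-s)·∫_θ^b (η-s)(η-θ)·M(η) dη. -/

import Mathlib

open MeasureTheory Set

noncomputable def pf (u : ℝ → ℝ) (t η : ℝ) : ℝ := if t < η then (η - t) * u t else 0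

lemma pf_meas {u : ℝ → ℝ} (hu : Continuous u) :
    Measurable (Function.uncurry (pf u)) := by
  unfold Function.uncurry pf
  exact Measurable.ite (measurableSet_lt measurable_fst measurable_snd)
    ((continuous_snd.sub continuous_fst).mul (hu.comp continuous_fst)).measurable
    measurable_const

lemma fubini3 (a b : ℝ) (hab : a < b) (M u : ℝ → ℝ)
    (hM : Continuous M) (hu : Continuous u) :
    ∫ s in Ioc a b, ∫ θ in Ioc a b, ∫ η in Ioc a b, pf u s η * pf u θ η * M η
      = ∫ η in Ioc a b, (∫ t in Ioc a b, pf u t η) * M η * (∫ t in Ioc a b, pf u t η) := by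
  set I := Ioc a b with hI
  set μ := volume.restrict I with hμ
  haveI hfin : IsFiniteMeasure μ := by
    constructor
    rw [hμ, Measure.restrict_apply_univ]
    exact measure_Ioc_lt_top
  -- bounds
  obtain ⟨Cu, hCu⟩ := isCompact_Icc.exists_bound_of_continuousOn (hu.continuousOn (s := Icc a b))
  obtain ⟨CM, hCM⟩ := isCompact_Icc.exists_bound_of_continuousOn (hM.continuousOn (s := Icc a b))
  have hCu0 : 0 ≤ Cu := le_trans (norm_nonneg _) (hCu a (left_mem_Icc.2 hab.le))
  have hCM0 : 0 ≤ CM := le_trans (norm_nonneg _) (hCM a (left_mem_Icc.2 hab.le))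
  set Cp := (b - a) * Cu with hCp
  have hCp0 : 0 ≤ Cp := mul_nonneg (by linarith) hCu0
  have hpf_bdd : ∀ t ∈ I, ∀ η ∈ I, ‖pf u t η‖ ≤ Cp := by
    intro t ht η hη
    have ht' : t ∈ Icc a b := Ioc_subset_Icc_self ht
    have hη' : η ∈ Icc a b := Ioc_subset_Icc_self hη
    rw [pf]
    split_ifs with h
    · rw [norm_mul]
      apply mul_le_mul _ (hCu t ht') (norm_nonneg _) (by linarith)
      rw [Real.norm_eq_abs, abs_sub_le_iff]
      constructor <;> [skip; skip] <;>
        · rcases ht' with ⟨h1, h2⟩; rcases hη' with ⟨h3, h4⟩; linarith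
    · simpa using hCp0
  have hMb : ∀ η ∈ I, ‖M η‖ ≤ CM := fun η hη => hCM η (Ioc_subset_Icc_self hη)
  -- G
  set G : ℝ → ℝ := fun η => ∫ t in I, pf u t η with hG
  have hGmeas : StronglyMeasurable G := by
    apply StronglyMeasurable.integral_prod_left (f := fun t η => pf u t η)
    exact (pf_meas hu).stronglyMeasurable
  have hGb : ∀ η ∈ I, ‖G η‖ ≤ (b - a) * Cp := by
    intro η hη
    have := norm_integral_le_of_norm_le_const (μ := μ) (f := fun t => pf u t η) (C := Cp) ?_
    · calc ‖G η‖ ≤ Cp * (μ univ).toReal := this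
        _ = (b - a) * Cp := by
          rw [hμ, Measure.restrict_apply_univ, hI, Real.volume_Ioc,
            ENNReal.toReal_ofReal (by linarith)]
          ring
    · rw [hμ, ae_restrict_iff' measurableSet_Ioc]
      exact Filter.Eventually.of_forall (fun t ht => hpf_bdd t ht η hη)
  have hIfin : (volume.prod volume) (I ×ˢ I) < ⊤ := by
    rw [Measure.prod_prod]
    exact ENNReal.mul_lt_top measure_Ioc_lt_top measure_Ioc_lt_top
  have hconst : ∀ c : ℝ, Integrable (fun _ : ℝ × ℝ => c) (μ.prod μ) := by
    intro c
    rw [hμ, Measure.prod_restrict]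
    exact integrableOn_const hIfin.ne
  -- step 1 : inner swap for each s
  have step1 : ∀ s ∈ I, (∫ θ in I, ∫ η in I, pf u s η * pf u θ η * M η)
      = ∫ η in I, ∫ θ in I, pf u s η * pf u θ η * M η := by
    intro s hs
    apply integral_integral_swap (f := fun θ η => pf u s η * pf u θ η * M η)
    have hmeas : AEStronglyMeasurable (Function.uncurry fun θ η => pf u s η * pf u θ η * M η)
        (μ.prod μ) := by
      apply Measurable.aestronglyMeasurable
      exact (((pf_meas hu).comp (measurable_const.prodMk measurable_snd)).mul
        ((pf_meas hu).comp (measurable_fst.prodMk measurable_snd))).mul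
        (hM.measurable.comp measurable_snd)
    apply (hconst (Cp * Cp * CM)).mono' hmeas
    rw [hμ, Measure.prod_restrict, ae_restrict_iff' (measurableSet_Ioc.prod measurableSet_Ioc)]
    apply Filter.Eventually.of_forall
    rintro ⟨θ, η⟩ ⟨hθ, hη⟩
    simp only [Function.uncurry, norm_mul]
    apply mul_le_mul _ (hMb η hη) (norm_nonneg _) (by positivity)
    exact mul_le_mul (hpf_bdd s hs η hη) (hpf_bdd θ hθ η hη) (norm_nonneg _) hCp0
  -- step 2 : factor inner integral
  have step2 : ∀ s η, (∫ θ in I, pf u s η * pf u θ η * M η) = (pf u s η * M η) * G η := by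
    intro s η
    rw [hG]
    rw [show (fun θ => pf u s η * pf u θ η * M η) = fun θ => (pf u s η * M η) * pf u θ η by
      funext θ; ring]
    exact integral_const_mul _ _
  -- step 3 : outer swap
  have step3 : (∫ s in I, ∫ η in I, (pf u s η * M η) * G η)
      = ∫ η in I, ∫ s in I, (pf u s η * M η) * G η := by
    apply integral_integral_swap (f := fun s η => (pf u s η * M η) * G η)
    have hmeas : AEStronglyMeasurable (Function.uncurry fun s η => (pf u s η * M η) * G η)
        (μ.prod μ) := by
      apply StronglyMeasurable.aestronglyMeasurable
      exact (((pf_meas hu).stronglyMeasurable.mul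
        (hM.measurable.comp measurable_snd).stronglyMeasurable).mul
        (hGmeas.comp_measurable measurable_snd))
    apply (hconst (Cp * CM * ((b - a) * Cp))).mono' hmeas
    rw [hμ, Measure.prod_restrict, ae_restrict_iff' (measurableSet_Ioc.prod measurableSet_Ioc)]
    apply Filter.Eventually.of_forall
    rintro ⟨s, η⟩ ⟨hs, hη⟩
    simp only [Function.uncurry, norm_mul]
    apply mul_le_mul _ (hGb η hη) (norm_nonneg _) (by positivity)
    exact mul_le_mul (hpf_bdd s hs η hη) (hMb η hη) (norm_nonneg _) hCp0
  calc ∫ s in I, ∫ θ in I, ∫ η in I, pf u s η * pf u θ η * M η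
      = ∫ s in I, ∫ η in I, (pf u s η * M η) * G η := by
        apply setIntegral_congr_fun measurableSet_Ioc
        intro s hs
        dsimp only
        rw [step1 s hs]
        exact setIntegral_congr_fun measurableSet_Ioc (fun η _ => step2 s η)
    _ = ∫ η in I, ∫ s in I, (pf u s η * M η) * G η := step3
    _ = ∫ η in I, G η * M η * G η := by
        apply setIntegral_congr_fun measurableSet_Ioc
        intro η _
        dsimp only
        rw [show (fun s => (pf u s η * M η) * G η) = fun s => (M η * G η) * pf u s η by
          funext s; ring]
        rw [integral_const_mul]
        show M η * G η * G η = G η * M η * G η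
        ring
lemma rep1 {a b : ℝ} (u : ℝ → ℝ) {s : ℝ} (ha : a ≤ s) (hb : s ≤ b) :
    ∫ t in a..s, (s - t) * u t = ∫ t in Ioc a b, pf u t s := by
  have hset : Ioo a s = Ioc a b ∩ Iio s := by
    ext t
    simp only [mem_Ioo, mem_inter_iff, mem_Ioc, mem_Iio]
    constructor
    · rintro ⟨h1, h2⟩; exact ⟨⟨h1, h2.le.trans hb⟩, h2⟩
    · rintro ⟨⟨h1, _⟩, h2⟩; exact ⟨h1, h2⟩
  have hind : ∀ t, pf u t s = (Iio s).indicator (fun t => (s - t) * u t) t := by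
    intro t; simp [pf, indicator]
  rw [intervalIntegral.integral_of_le ha, MeasureTheory.integral_Ioc_eq_integral_Ioo, hset,
    ← MeasureTheory.setIntegral_indicator measurableSet_Iio]
  exact MeasureTheory.setIntegral_congr_fun measurableSet_Ioc (fun t _ => (hind t).symm)

noncomputable def ind (x : ℝ) : ℝ := if 0 ≤ x then 1 else 0

lemma rep2 {a b : ℝ} (M u : ℝ → ℝ) {s θ : ℝ} (hs : s ∈ Ioc a b) (hθ : θ ∈ Ioc a b)
    (hne : θ ≠ s) :
    u s * (ind (s - θ) * (∫ η in s..b, (η - s) * (η - θ) * M η)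
         + ind (θ - s) * (∫ η in θ..b, (η - s) * (η - θ) * M η)) * u θ
      = ∫ η in Ioc a b, pf u s η * pf u θ η * M η := by
  have key : ∀ c, a < c → c ≤ b → max s θ = c →
      ∫ η in Ioc a b, pf u s η * pf u θ η * M η
        = u s * u θ * ∫ η in c..b, (η - s) * (η - θ) * M η := by
    intro c hac hcb hmax
    have hset : Ioc a b ∩ Ioi c = Ioc c b := by
      ext t
      simp only [mem_inter_iff, mem_Ioc, mem_Ioi]
      constructor
      · rintro ⟨⟨_, h2⟩, h3⟩; exact ⟨h3, h2⟩
      · rintro ⟨h1, h2⟩; exact ⟨⟨hac.trans h1, h2⟩, h1⟩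
    have hind : ∀ η, pf u s η * pf u θ η * M η
        = (Ioi c).indicator (fun η => u s * u θ * ((η - s) * (η - θ) * M η)) η := by
      intro η
      by_cases h : c < η
      · have hsη : s < η := lt_of_le_of_lt (hmax ▸ le_max_left s θ) h
        have hθη : θ < η := lt_of_le_of_lt (hmax ▸ le_max_right s θ) h
        simp only [pf, indicator, mem_Ioi, if_pos h, if_pos hsη, if_pos hθη]
        ring
      · have : ¬ s < η ∨ ¬ θ < η := by
          rcases max_cases s θ with ⟨h1, _⟩ | ⟨h1, _⟩
          · left; rw [← h1, hmax]; exact h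
          · right; rw [← h1, hmax]; exact h
        simp only [pf, indicator, mem_Ioi, if_neg h]
        rcases this with h' | h' <;> simp [if_neg h']
    rw [MeasureTheory.setIntegral_congr_fun measurableSet_Ioc (fun η _ => hind η),
      MeasureTheory.setIntegral_indicator measurableSet_Ioi, hset,
      ← intervalIntegral.integral_of_le hcb, intervalIntegral.integral_const_mul]
  rcases lt_or_gt_of_ne hne with h | h
  · -- θ < s, max = s
    rw [key s hs.1 hs.2 (max_eq_left h.le)]
    have h1 : ind (s - θ) = 1 := by simp [ind, sub_nonneg, h.le]
    have h2 : ind (θ - s) = 0 := by simp [ind, sub_nonneg]; linarith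
    rw [h1, h2]; ring
  · -- s < θ, max = θ
    rw [key θ hθ.1 hθ.2 (max_eq_right h.le)]
    have h1 : ind (s - θ) = 0 := by simp [ind, sub_nonneg]; linarith
    have h2 : ind (θ - s) = 1 := by simp [ind, sub_nonneg, h.le]
    rw [h1, h2]; ring

theorem core (a b : ℝ) (hab : a < b) (M u : ℝ → ℝ)
    (hM : Continuous M) (hu : Continuous u) :
    ∫ s in a..b, (∫ η in a..s, (s - η) * u η) * M s * (∫ ζ in a..s, (s - ζ) * u ζ)
      = ∫ s in a..b, ∫ θ in a..b,
          u s * (ind (s - θ) * (∫ η in s..b, (η - s) * (η - θ) * M η)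
                 + ind (θ - s) * (∫ η in θ..b, (η - s) * (η - θ) * M η)) * u θ := by
  rw [intervalIntegral.integral_of_le hab.le, intervalIntegral.integral_of_le hab.le]
  calc ∫ s in Ioc a b, (∫ η in a..s, (s - η) * u η) * M s * (∫ ζ in a..s, (s - ζ) * u ζ)
      = ∫ η in Ioc a b, (∫ t in Ioc a b, pf u t η) * M η * (∫ t in Ioc a b, pf u t η) := by
        apply setIntegral_congr_fun measurableSet_Ioc
        intro s hs
        dsimp only
        rw [rep1 u hs.1.le hs.2]
    _ = ∫ s in Ioc a b, ∫ θ in Ioc a b, ∫ η in Ioc a b, pf u s η * pf u θ η * M η :=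
        (fubini3 a b hab M u hM hu).symm
    _ = ∫ s in Ioc a b, ∫ θ in a..b,
          u s * (ind (s - θ) * (∫ η in s..b, (η - s) * (η - θ) * M η)
                 + ind (θ - s) * (∫ η in θ..b, (η - s) * (η - θ) * M η)) * u θ := by
        apply setIntegral_congr_fun measurableSet_Ioc
        intro s hs
        dsimp only
        rw [intervalIntegral.integral_of_le hab.le]
        apply integral_congr_ae
        have h0 : ∀ᵐ (θ : ℝ) ∂volume, θ ≠ s := by
          rw [MeasureTheory.ae_iff]
          convert Real.volume_singleton (a := s) using 2
          ext θ; simp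
        have h1 : ∀ᵐ (θ : ℝ) ∂(volume.restrict (Ioc a b)), θ ≠ s := ae_restrict_of_ae h0
        filter_upwards [h1, ae_restrict_mem measurableSet_Ioc] with θ hne hmem
        exact (rep2 M u hs hmem hne).symm

theorem stmt15 (a b : ℝ) (hab : a < b) (M u : ℝ → ℝ)
    (hM : ContinuousOn M (Set.Icc a b)) (hu : ContinuousOn u (Set.Icc a b)) :
    ∫ s in a..b, (∫ η in a..s, (s - η) * u η) * M s * (∫ ζ in a..s, (s - ζ) * u ζ)
      = ∫ s in a..b, ∫ θ in a..b,
          u s * (ind (s - θ) * (∫ η in s..b, (η - s) * (η - θ) * M η)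
                 + ind (θ - s) * (∫ η in θ..b, (η - s) * (η - θ) * M η)) * u θ := by
  set g : ℝ → ℝ := fun x => max a (min b x) with hg
  have hgc : Continuous g := continuous_const.max (continuous_const.min continuous_id)
  have hgmem : ∀ x, g x ∈ Icc a b :=
    fun x => ⟨le_max_left _ _, max_le hab.le (min_le_left _ _)⟩
  have hgid : ∀ x ∈ Icc a b, g x = x := by
    intro x hx
    rw [hg]
    dsimp only
    rw [min_eq_right hx.2, max_eq_right hx.1]
  set M' : ℝ → ℝ := fun x => M (g x) with hM'def
  set u' : ℝ → ℝ := fun x => u (g x) with hu'def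
  have hM' : Continuous M' := hM.comp_continuous hgc hgmem
  have hu' : Continuous u' := hu.comp_continuous hgc hgmem
  have hMe : ∀ x ∈ Icc a b, M x = M' x := by
    intro x hx; rw [hM'def]; dsimp only; rw [hgid x hx]
  have hue : ∀ x ∈ Icc a b, u x = u' x := by
    intro x hx; rw [hu'def]; dsimp only; rw [hgid x hx]
  have huIcc : uIcc a b = Icc a b := uIcc_of_le hab.le
  have hsub : ∀ {c d : ℝ}, c ∈ Icc a b → d ∈ Icc a b → uIcc c d ⊆ Icc a b := by
    intro c d hc hd
    rw [← huIcc]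
    exact uIcc_subset_uIcc (huIcc ▸ hc) (huIcc ▸ hd)
  have ha' : a ∈ Icc a b := left_mem_Icc.2 hab.le
  have hb' : b ∈ Icc a b := right_mem_Icc.2 hab.le
  calc ∫ s in a..b, (∫ η in a..s, (s - η) * u η) * M s * (∫ ζ in a..s, (s - ζ) * u ζ)
      = ∫ s in a..b, (∫ η in a..s, (s - η) * u' η) * M' s * (∫ ζ in a..s, (s - ζ) * u' ζ) := by
        apply intervalIntegral.integral_congr
        intro s hs
        rw [huIcc] at hs
        have hinner : (∫ η in a..s, (s - η) * u η) = ∫ η in a..s, (s - η) * u' η := by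
          apply intervalIntegral.integral_congr
          intro t ht
          dsimp only
          rw [hue t (hsub ha' hs ht)]
        dsimp only
        rw [hinner, hMe s hs]
    _ = ∫ s in a..b, ∫ θ in a..b,
          u' s * (ind (s - θ) * (∫ η in s..b, (η - s) * (η - θ) * M' η)
                 + ind (θ - s) * (∫ η in θ..b, (η - s) * (η - θ) * M' η)) * u' θ :=
        core a b hab M' u' hM' hu'
    _ = ∫ s in a..b, ∫ θ in a..b,
          u s * (ind (s - θ) * (∫ η in s..b, (η - s) * (η - θ) * M η)
                 + ind (θ - s) * (∫ η in θ..b, (η - s) * (η - θ) * M η)) * u θ := by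
        apply intervalIntegral.integral_congr
        intro s hs
        rw [huIcc] at hs
        apply intervalIntegral.integral_congr
        intro θ hθ
        rw [huIcc] at hθ
        have h1 : (∫ η in s..b, (η - s) * (η - θ) * M' η)
            = ∫ η in s..b, (η - s) * (η - θ) * M η := by
          apply intervalIntegral.integral_congr
          intro t ht
          dsimp only
          rw [hMe t (hsub hs hb' ht)]
        have h2 : (∫ η in θ..b, (η - s) * (η - θ) * M' η)
            = ∫ η in θ..b, (η - s) * (η - θ) * M η := by
          apply intervalIntegral.integral_congr
          intro t ht
          dsimp only
          rw [hMe t (hsub hθ hb' ht)]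
        dsimp only
        rw [h1, h2, hue s hs, hue θ hθ]
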